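/- Let f : ℝ^n → ℝ be convex and differentiable with 1-Lipschitz gradient, let x₀ ∈ ℝ^n and let x_* be a global minimizer of f with x₀ ≠ x_*. Define f̂ : (ℝ^n)^p → ℝ by f̂(x^{(1)},…,x^{(p)}) = f(x^{(1)} + … + x^{(p)}), and let x̂₀ and x̂_* have all p blocks equal to x₀/p and x_*/p respectively. Let (x̂_i)_{i=0,…,pK} be the cyclic coordinate descent iterates on f̂ with step sizes γ_1,…,γ_p > 0 starting from x̂₀, and set s_i = Σ_{ℓ=1}^p x̂_i^{(ℓ)}. Then: (a) x̂_* is a global minimizer of f̂; (b) s_0 = x₀ and at every step i with active block ℓ, s_i = s_{i−1} − γ_ℓ ∇f(s_{i−1}), i.e., (s_i) are gradient descent iterates on f with cyclically repeating step sizes; (c) f̂(x̂_i) = f(s_i) for all i; (d) ‖x̂₀ − x̂_*‖²_{(1,…,1)} = (1/p)‖x₀ − x_*‖²; and consequently (e) (f̂(x̂_{pK}) − f̂(x̂_*))/‖x̂₀ − x̂_*‖²_{(1,…,1)} = p · (f(s_{pK}) − f(x_*))/‖x₀ − x_*‖². In particular, the worst-case of p-block cyclic coordinate descent over F^coord_{0,(1,…,1)}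 after K cycles is at least p times the worst-case of gradient descent over 1-smooth convex functions after pK steps. -/

import Mathlib

open RealInnerProductSpace

noncomputable section

/-- The `ℓ`-th block `ℝ^{d_ℓ}` of the decomposition `ℝ^d = ℝ^{d_1} × … × ℝ^{d_p}`. -/
abbrev Blk {p : ℕ} (d : Fin p → ℕ) (ℓ : Fin p) : Type := EuclideanSpace ℝ (Fin (d ℓ))

/-- The space `ℝ^d = ℝ^{d_1} × … × ℝ^{d_p}` with the Euclidean (ℓ²) norm. -/
abbrev Sp {p : ℕ} (d : Fin p → ℕ) : Type := PiLp 2 (Blk d)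

/-- The selection embedding `U_ℓ : ℝ^{d_ℓ} → ℝ^d` placing `h` in block `ℓ` and `0` elsewhere. -/
def inj {p : ℕ} (d : Fin p → ℕ) (ℓ : Fin p) (h : Blk d ℓ) : Sp d :=
  (WithLp.equiv 2 (∀ ℓ, Blk d ℓ)).symm (Pi.single ℓ h)

/-- Membership in the class `F^coord_{0,L}(ℝ^d)`: convex, differentiable, and for each block
`ℓ` the partial gradient `∇^{(ℓ)} f` is `L_ℓ`-Lipschitz along the block `ℓ`. -/
def IsCoordSmooth {p : ℕ} (d : Fin p → ℕ) (L : Fin p → ℝ) (f : Sp d → ℝ) : Prop :=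
  ConvexOn ℝ Set.univ f ∧ Differentiable ℝ f ∧
    ∀ (ℓ : Fin p) (x : Sp d) (h : Blk d ℓ),
      ‖gradient f (x + inj d ℓ h) ℓ - gradient f x ℓ‖ ≤ L ℓ * ‖h‖

/-- Block index used at step `i` (steps counted from `0`), cycling through the `p` blocks. -/
def blkIdx (p : ℕ) (hp : 0 < p) (i : ℕ) : Fin p := ⟨i % p, Nat.mod_lt i hp⟩

/-- `x` is a sequence of cyclic coordinate descent iterates on `f`, with step size `s ℓ`
used for the block `ℓ`, blocks being selected in cyclic order. -/
def IsCCD {p : ℕ} (hp : 0 < p) (d : Fin p → ℕ) (s : Fin p → ℝ)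
    (f : Sp d → ℝ) (x : ℕ → Sp d) : Prop :=
  ∀ i : ℕ, x (i + 1) = x i - s (blkIdx p hp i) •
    inj d (blkIdx p hp i) (gradient f (x i) (blkIdx p hp i))

/-- Worst case of `K` cycles of cyclic coordinate descent with per-block step sizes `s` over the
class `F^coord_{0,L}(ℝ^d)`, performance measured by `(f(x_{pK}) - f_*)/‖x₀ - x_*‖²_L`. -/
def WCCD {p : ℕ} (hp : 0 < p) (d : Fin p → ℕ) (s : Fin p → ℝ) (L : Fin p → ℝ) (K : ℕ) : ℝ :=
  sSup {r : ℝ | ∃ (f : Sp d → ℝ) (x : ℕ → Sp d) (xs : Sp d),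
    IsCoordSmooth d L f ∧ IsMinOn f Set.univ xs ∧ IsCCD hp d s f x ∧ x 0 ≠ xs ∧
    r = (f (x (p * K)) - f xs) / ∑ ℓ, L ℓ * ‖x 0 ℓ - xs ℓ‖ ^ 2}

/-- Worst case of `N` steps of gradient descent with cyclically repeating step sizes `γ` over
`1`-smooth convex functions, performance measured by `(g(u_N) - g_*)/‖u₀ - u_*‖²`. -/
def WGD (n : ℕ) {p : ℕ} (hp : 0 < p) (γ : Fin p → ℝ) (N : ℕ) : ℝ :=
  sSup {r : ℝ | ∃ (g : EuclideanSpace ℝ (Fin n) → ℝ) (u : ℕ → EuclideanSpace ℝ (Fin n))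
      (us : EuclideanSpace ℝ (Fin n)),
    ConvexOn ℝ Set.univ g ∧ Differentiable ℝ g ∧
    (∀ a b : EuclideanSpace ℝ (Fin n), ‖gradient g a - gradient g b‖ ≤ ‖a - b‖) ∧
    IsMinOn g Set.univ us ∧
    (∀ i : ℕ, u (i + 1) = u i - γ (blkIdx p hp i) • gradient g (u i)) ∧ u 0 ≠ us ∧
    r = (g (u N) - g us) / ‖u 0 - us‖ ^ 2}


/-- The sum of the `p` blocks of a point of `(ℝ^n)^p`. -/
def blockSum (p : ℕ) {n : ℕ} (x : Sp (fun _ : Fin p => n)) : EuclideanSpace ℝ (Fin n) :=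
  ∑ ℓ : Fin p, x ℓ

/-- The function `f̂(x^{(1)},…,x^{(p)}) = f(x^{(1)} + … + x^{(p)})`. -/
def fhat (p : ℕ) {n : ℕ} (f : EuclideanSpace ℝ (Fin n) → ℝ) :
    Sp (fun _ : Fin p => n) → ℝ :=
  fun x => f (∑ ℓ : Fin p, x ℓ)

/-- The point of `(ℝ^n)^p` whose `p` blocks all equal `v/p`. -/
def diagPt (p : ℕ) {n : ℕ} (v : EuclideanSpace ℝ (Fin n)) : Sp (fun _ : Fin p => n) :=
  (WithLp.equiv 2 (∀ _ : Fin p, EuclideanSpace ℝ (Fin n))).symm fun _ => (p : ℝ)⁻¹ • v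

section AuxProofs
open Set

section OneDim
variable {F : Type*} [NormedAddCommGroup F] [InnerProductSpace ℝ F] [CompleteSpace F]

lemma hasDerivAt_line (f : F → ℝ) (hf : Differentiable ℝ f) (x v : F) (t : ℝ) :
    HasDerivAt (fun s : ℝ => f (x + s • v)) ⟪gradient f (x + t • v), v⟫ t := by
  have hline : HasDerivAt (fun s : ℝ => x + s • v) v t := by
    simpa using ((hasDerivAt_id t).smul_const v).const_add x
  have hg := (hf (x + t • v)).hasGradientAt.hasFDerivAt
  have := hg.comp_hasDerivAt t hline
  simpa [InnerProductSpace.toDual_apply_apply, Function.comp_def] using this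

lemma grad_convex_le (f : F → ℝ) (hc : ConvexOn ℝ univ f) (hf : Differentiable ℝ f)
    (x y : F) : f x + ⟪gradient f x, y - x⟫ ≤ f y := by
  set φ : ℝ → ℝ := fun t => f (x + t • (y - x)) with hφ
  have hφc : ConvexOn ℝ univ φ := by
    have : φ = f ∘ (AffineMap.lineMap x y : ℝ →ᵃ[ℝ] F) := by
      funext t; simp [hφ, AffineMap.lineMap_apply, add_comm]
    rw [this]
    simpa using hc.comp_affineMap (AffineMap.lineMap x y)
  have hd : HasDerivAt φ ⟪gradient f x, y - x⟫ 0 := by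
    simpa using hasDerivAt_line f hf x (y - x) 0
  have := hφc.le_slope_of_hasDerivAt (mem_univ 0) (mem_univ 1) one_pos hd
  rw [slope_def_field] at this
  simp only [hφ] at this ⊢
  simp only [zero_smul, add_zero, one_smul] at this
  have h1 : x + (y - x) = y := by abel
  rw [h1] at this
  nlinarith [this]

lemma descent_quad {φ φ' : ℝ → ℝ} (hd : ∀ t, HasDerivAt φ (φ' t) t) {c : ℝ}
    (hlip : ∀ t ∈ Icc (0:ℝ) 1, φ' t - φ' 0 ≤ c * t) :
    φ 1 ≤ φ 0 + φ' 0 + c / 2 := by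
  set ψ : ℝ → ℝ := fun t => φ t - t * φ' 0 - c * t ^ 2 / 2 with hψ
  have hψd : ∀ t, HasDerivAt ψ (φ' t - φ' 0 - c * t) t := by
    intro t
    have h1 : HasDerivAt (fun t : ℝ => t * φ' 0) (φ' 0) t := by
      simpa using (hasDerivAt_id t).mul_const (φ' 0)
    have h2 : HasDerivAt (fun t : ℝ => c * t ^ 2 / 2) (c * t) t := by
      have := ((hasDerivAt_pow 2 t).const_mul c).div_const 2
      norm_num at this
      exact this.congr_deriv (by ring)
    exact ((hd t).sub h1).sub h2
  have hcont : Continuous ψ := by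
    have : Differentiable ℝ ψ := fun t => (hψd t).differentiableAt
    exact this.continuous
  have hanti : AntitoneOn ψ (Icc 0 1) := by
    apply antitoneOn_of_deriv_nonpos (convex_Icc 0 1) hcont.continuousOn
    · intro t _
      exact ((hψd t).differentiableAt).differentiableWithinAt
    · intro t ht
      rw [interior_Icc] at ht
      rw [(hψd t).deriv]
      have := hlip t ⟨le_of_lt ht.1, le_of_lt ht.2⟩
      linarith
  have := hanti (left_mem_Icc.2 zero_le_one) (right_mem_Icc.2 zero_le_one) zero_le_one
  simp only [hψ] at this
  nlinarith [this]
end OneDim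

section Blocks
variable {p : ℕ} {d : Fin p → ℕ}

lemma inj_apply (ℓ : Fin p) (h : Blk d ℓ) (m : Fin p) : inj d ℓ h m = Pi.single ℓ h m := rfl

lemma inner_inj (g : Sp d) (ℓ : Fin p) (h : Blk d ℓ) : ⟪g, inj d ℓ h⟫ = ⟪g ℓ, h⟫ := by
  rw [PiLp.inner_apply, Finset.sum_eq_single ℓ]
  · simp [inj_apply]
  · intro b _ hb; simp [inj_apply, Pi.single_eq_of_ne hb]
  · simp

lemma inj_smul (ℓ : Fin p) (c : ℝ) (h : Blk d ℓ) : inj d ℓ (c • h) = c • inj d ℓ h := by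
  ext m
  simp [inj_apply, Pi.single_smul, PiLp.smul_apply]

lemma inj_neg (ℓ : Fin p) (h : Blk d ℓ) : inj d ℓ (-h) = - inj d ℓ h := by
  ext m
  simp [inj_apply, Pi.single_neg, PiLp.neg_apply]

lemma block_descent (f : Sp d → ℝ) (hf : Differentiable ℝ f) (ℓ : Fin p)
    (hL : ∀ (x : Sp d) (h : Blk d ℓ),
      ‖gradient f (x + inj d ℓ h) ℓ - gradient f x ℓ‖ ≤ 1 * ‖h‖)
    (x : Sp d) (h : Blk d ℓ) :
    f (x + inj d ℓ h) ≤ f x + ⟪gradient f x ℓ, h⟫ + ‖h‖ ^ 2 / 2 := by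
  set v := inj d ℓ h with hv
  set φ' : ℝ → ℝ := fun t => ⟪gradient f (x + t • v), v⟫ with hφ'
  have hd : ∀ t, HasDerivAt (fun s => f (x + s • v)) (φ' t) t := hasDerivAt_line f hf x v
  have h00 : x + (0:ℝ) • v = x := by simp
  have hφ0 : φ' 0 = ⟪gradient f x ℓ, h⟫ := by
    simp only [hφ', h00, hv, inner_inj, zero_smul, add_zero]
  have hlip : ∀ t ∈ Icc (0:ℝ) 1, φ' t - φ' 0 ≤ ‖h‖ ^ 2 * t := by
    intro t ht
    have heq : x + t • v = x + inj d ℓ (t • h) := by rw [inj_smul]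
    have h1 : φ' t - φ' 0 = ⟪gradient f (x + t • v) ℓ - gradient f x ℓ, h⟫ := by
      simp only [hφ', h00, hv, inner_inj, inner_sub_left, zero_smul, add_zero]
    rw [h1]
    calc ⟪gradient f (x + t • v) ℓ - gradient f x ℓ, h⟫
        ≤ ‖gradient f (x + t • v) ℓ - gradient f x ℓ‖ * ‖h‖ := real_inner_le_norm _ _
      _ ≤ (1 * ‖t • h‖) * ‖h‖ := by
          apply mul_le_mul_of_nonneg_right _ (norm_nonneg h)
          rw [heq]; exact hL x (t • h)
      _ = ‖h‖ ^ 2 * t := by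
          rw [norm_smul, Real.norm_eq_abs, abs_of_nonneg ht.1]; ring
  have := descent_quad hd hlip
  simp only [one_smul, zero_smul, add_zero] at this
  rw [hφ0] at this
  linarith

lemma grad_blk_sq (f : Sp d → ℝ) (hf : Differentiable ℝ f) (ℓ : Fin p)
    (hL : ∀ (x : Sp d) (h : Blk d ℓ),
      ‖gradient f (x + inj d ℓ h) ℓ - gradient f x ℓ‖ ≤ 1 * ‖h‖)
    (xs : Sp d) (hmin : ∀ y, f xs ≤ f y) (x : Sp d) :
    ‖gradient f x ℓ‖ ^ 2 ≤ 2 * (f x - f xs) := by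
  have h1 := block_descent f hf ℓ hL x (-(gradient f x ℓ))
  have h2 := hmin (x + inj d ℓ (-(gradient f x ℓ)))
  rw [inner_neg_right, real_inner_self_eq_norm_sq] at h1
  rw [norm_neg] at h1
  nlinarith [h1, h2]

lemma init_bound (f : Sp d → ℝ) (hc : ConvexOn ℝ univ f) (hf : Differentiable ℝ f)
    (xs : Sp d) (hmin : ∀ y, f xs ≤ f y)
    (hsq : ∀ ℓ x, ‖gradient f x ℓ‖ ^ 2 ≤ 2 * (f x - f xs))
    (hp : 0 < p) (x : Sp d) :
    f x - f xs ≤ 2 * p * ∑ ℓ, ‖x ℓ - xs ℓ‖ ^ 2 := by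
  have hgi := grad_convex_le f hc hf x xs
  have hinner : ⟪gradient f x, xs - x⟫ = ∑ ℓ, ⟪gradient f x ℓ, (xs - x) ℓ⟫ :=
    PiLp.inner_apply _ _
  have hpR : (0:ℝ) < p := by exact_mod_cast hp
  have hterm : ∀ ℓ : Fin p, ⟪gradient f x ℓ, x ℓ - xs ℓ⟫ ≤
      (1 / (4 * p)) * ‖gradient f x ℓ‖ ^ 2 + p * ‖x ℓ - xs ℓ‖ ^ 2 := by
    intro ℓ
    have h1 : ⟪gradient f x ℓ, x ℓ - xs ℓ⟫ ≤ ‖gradient f x ℓ‖ * ‖x ℓ - xs ℓ‖ :=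
      real_inner_le_norm _ _
    have h2 := sq_nonneg (‖gradient f x ℓ‖ - 2 * p * ‖x ℓ - xs ℓ‖)
    have h3 : (0:ℝ) < 4 * p := by linarith
    have key : ‖gradient f x ℓ‖ * ‖x ℓ - xs ℓ‖ ≤
        (1 / (4 * p)) * ‖gradient f x ℓ‖ ^ 2 + p * ‖x ℓ - xs ℓ‖ ^ 2 := by
      have h5 : 4 * (p:ℝ) * (‖gradient f x ℓ‖ * ‖x ℓ - xs ℓ‖) ≤
          4 * (p:ℝ) * ((1 / (4 * p)) * ‖gradient f x ℓ‖ ^ 2 + p * ‖x ℓ - xs ℓ‖ ^ 2) := by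
        have h6 : 4 * (p:ℝ) * ((1 / (4 * p)) * ‖gradient f x ℓ‖ ^ 2 + p * ‖x ℓ - xs ℓ‖ ^ 2)
            = ‖gradient f x ℓ‖ ^ 2 + 4 * p ^ 2 * ‖x ℓ - xs ℓ‖ ^ 2 := by
          field_simp
        rw [h6]; nlinarith [h2]
      exact le_of_mul_le_mul_left h5 h3
    linarith [h1, key]
  have hsum : f x - f xs ≤ ∑ ℓ, ⟪gradient f x ℓ, x ℓ - xs ℓ⟫ := by
    have : ∑ ℓ, ⟪gradient f x ℓ, (xs - x) ℓ⟫ = - ∑ ℓ, ⟪gradient f x ℓ, x ℓ - xs ℓ⟫ := by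
      rw [← Finset.sum_neg_distrib]
      congr 1; funext ℓ
      rw [← inner_neg_right]
      congr 1
      simp [PiLp.sub_apply]
    rw [hinner, this] at hgi
    linarith
  have hsum2 : ∑ ℓ, ⟪gradient f x ℓ, x ℓ - xs ℓ⟫ ≤
      (1 / (4 * p)) * ∑ ℓ, ‖gradient f x ℓ‖ ^ 2 + p * ∑ ℓ, ‖x ℓ - xs ℓ‖ ^ 2 := by
    rw [Finset.mul_sum, Finset.mul_sum, ← Finset.sum_add_distrib]
    exact Finset.sum_le_sum fun ℓ _ => hterm ℓ
  have hgsum : ∑ ℓ, ‖gradient f x ℓ‖ ^ 2 ≤ (p : ℝ) * (2 * (f x - f xs)) := by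
    calc ∑ ℓ, ‖gradient f x ℓ‖ ^ 2 ≤ ∑ _ℓ : Fin p, 2 * (f x - f xs) :=
          Finset.sum_le_sum fun ℓ _ => hsq ℓ x
      _ = (p : ℝ) * (2 * (f x - f xs)) := by
          rw [Finset.sum_const, Finset.card_univ, Fintype.card_fin, nsmul_eq_mul]
  have hfin : f x - f xs ≤ (1 / (4 * p)) * ((p:ℝ) * (2 * (f x - f xs))) + p * ∑ ℓ, ‖x ℓ - xs ℓ‖ ^ 2 := by
    have hc1 : (0:ℝ) ≤ 1 / (4 * p) := by positivity
    calc f x - f xs ≤ ∑ ℓ, ⟪gradient f x ℓ, x ℓ - xs ℓ⟫ := hsum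
      _ ≤ (1 / (4 * p)) * ∑ ℓ, ‖gradient f x ℓ‖ ^ 2 + p * ∑ ℓ, ‖x ℓ - xs ℓ‖ ^ 2 := hsum2
      _ ≤ (1 / (4 * p)) * ((p:ℝ) * (2 * (f x - f xs))) + p * ∑ ℓ, ‖x ℓ - xs ℓ‖ ^ 2 := by
          gcongr
  have h14 : (1 / (4 * (p:ℝ))) * ((p:ℝ) * (2 * (f x - f xs))) = (f x - f xs) / 2 := by
    field_simp; ring
  rw [h14] at hfin
  linarith

end Blocks

section Bound
variable {p : ℕ} {d : Fin p → ℕ}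

lemma ccd_value_bound (hp : 0 < p) (γ : Fin p → ℝ) (hγ : ∀ ℓ, 0 ≤ γ ℓ)
    (f : Sp d → ℝ) (hsm : IsCoordSmooth d (fun _ => 1) f)
    (xs : Sp d) (hmin : ∀ y, f xs ≤ f y)
    (x : ℕ → Sp d) (hccd : IsCCD hp d γ f x) (i : ℕ) :
    f (x i) - f xs ≤ (f (x 0) - f xs) * ∏ j ∈ Finset.range i, (1 + γ (blkIdx p hp j) ^ 2) := by
  obtain ⟨hc, hf, hL⟩ := hsm
  induction i with
  | zero => simp
  | succ i ih =>
    set ℓ := blkIdx p hp i with hℓ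
    set g := gradient f (x i) ℓ with hg
    have hstep : x (i + 1) = x i + inj d ℓ (-(γ ℓ • g)) := by
      rw [hccd i, inj_neg, inj_smul, sub_eq_add_neg]
    have hdesc := block_descent f hf ℓ (fun y h => by simpa using hL ℓ y h) (x i) (-(γ ℓ • g))
    rw [← hstep] at hdesc
    have hsq := grad_blk_sq f hf ℓ (fun y h => by simpa using hL ℓ y h) xs hmin (x i)
    rw [inner_neg_right, inner_smul_right, real_inner_self_eq_norm_sq, norm_neg, norm_smul,
      Real.norm_eq_abs, abs_of_nonneg (hγ ℓ)] at hdesc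
    have hΔpos : 0 ≤ f (x i) - f xs := by linarith [hmin (x i)]
    have h1 : f (x (i + 1)) - f xs ≤ (1 + γ ℓ ^ 2) * (f (x i) - f xs) := by
      nlinarith [hγ ℓ, hsq, mul_nonneg (hγ ℓ) (sq_nonneg ‖g‖)]
    have hprodnn : (0:ℝ) ≤ ∏ j ∈ Finset.range i, (1 + γ (blkIdx p hp j) ^ 2) :=
      Finset.prod_nonneg fun j _ => by nlinarith [sq_nonneg (γ (blkIdx p hp j))]
    calc f (x (i + 1)) - f xs ≤ (1 + γ ℓ ^ 2) * (f (x i) - f xs) := h1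
      _ ≤ (1 + γ ℓ ^ 2) * ((f (x 0) - f xs) * ∏ j ∈ Finset.range i, (1 + γ (blkIdx p hp j) ^ 2)) := by
          apply mul_le_mul_of_nonneg_left ih
          nlinarith [sq_nonneg (γ ℓ)]
      _ = (f (x 0) - f xs) * ∏ j ∈ Finset.range (i + 1), (1 + γ (blkIdx p hp j) ^ 2) := by
          rw [Finset.prod_range_succ]; ring

lemma ratio_bound (hp : 0 < p) (γ : Fin p → ℝ) (hγ : ∀ ℓ, 0 ≤ γ ℓ) (N : ℕ)
    (f : Sp d → ℝ) (x : ℕ → Sp d) (xs : Sp d)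
    (hsm : IsCoordSmooth d (fun _ => 1) f) (hmin : IsMinOn f Set.univ xs)
    (hccd : IsCCD hp d γ f x) (hne : x 0 ≠ xs) :
    (f (x N) - f xs) / ∑ ℓ, ‖x 0 ℓ - xs ℓ‖ ^ 2
      ≤ 2 * p * ∏ j ∈ Finset.range N, (1 + γ (blkIdx p hp j) ^ 2) := by
  have hmin' : ∀ y, f xs ≤ f y := fun y => hmin (Set.mem_univ y)
  obtain ⟨D, hD⟩ : ∃ D : ℝ, D = ∑ ℓ, ‖x 0 ℓ - xs ℓ‖ ^ 2 := ⟨_, rfl⟩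
  rw [← hD]
  have hDpos : 0 < D := by
    rw [hD]
    obtain ⟨ℓ, hℓ⟩ : ∃ ℓ, x 0 ℓ ≠ xs ℓ := by
      by_contra hcon
      push_neg at hcon
      exact hne (PiLp.ext hcon)
    apply Finset.sum_pos'
    · intro m _; positivity
    · refine ⟨ℓ, Finset.mem_univ ℓ, ?_⟩
      have hne0 : x 0 ℓ - xs ℓ ≠ 0 := sub_ne_zero.2 hℓ
      exact pow_pos (norm_pos_iff.2 hne0) 2
  have hsq : ∀ (m : Fin p) (y : Sp d), ‖gradient f y m‖ ^ 2 ≤ 2 * (f y - f xs) :=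
    fun m y => grad_blk_sq f hsm.2.1 m (fun z h => by simpa using hsm.2.2 m z h) xs hmin' y
  have h0 : f (x 0) - f xs ≤ 2 * p * D := by
    rw [hD]; exact init_bound f hsm.1 hsm.2.1 xs hmin' hsq hp (x 0)
  have hN := ccd_value_bound hp γ hγ f hsm xs hmin' x hccd N
  have hprodnn : (0:ℝ) ≤ ∏ j ∈ Finset.range N, (1 + γ (blkIdx p hp j) ^ 2) :=
    Finset.prod_nonneg fun j _ => by nlinarith [sq_nonneg (γ (blkIdx p hp j))]
  rw [div_le_iff₀ hDpos]
  calc f (x N) - f xs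
      ≤ (f (x 0) - f xs) * ∏ j ∈ Finset.range N, (1 + γ (blkIdx p hp j) ^ 2) := hN
    _ ≤ (2 * ↑p * D) * ∏ j ∈ Finset.range N, (1 + γ (blkIdx p hp j) ^ 2) :=
        mul_le_mul_of_nonneg_right h0 hprodnn
    _ = 2 * ↑p * (∏ j ∈ Finset.range N, (1 + γ (blkIdx p hp j) ^ 2)) * D := by ring
end Bound

section Fhat
variable {p n : ℕ}

/-- The block-sum as a continuous linear map. -/
def sumCLM (p n : ℕ) : Sp (fun _ : Fin p => n) →L[ℝ] EuclideanSpace ℝ (Fin n) :=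
  LinearMap.toContinuousLinearMap
    { toFun := blockSum p
      map_add' := by
        intro x y
        simp only [blockSum, PiLp.add_apply]
        exact Finset.sum_add_distrib
      map_smul' := by
        intro c x
        simp only [blockSum, PiLp.smul_apply, RingHom.id_apply]
        exact (Finset.smul_sum).symm }

lemma sumCLM_apply (x : Sp (fun _ : Fin p => n)) : sumCLM p n x = ∑ ℓ : Fin p, x ℓ := rfl

/-- The point with all blocks equal to `v`. -/
def allBlk (p : ℕ) {n : ℕ} (v : EuclideanSpace ℝ (Fin n)) : Sp (fun _ : Fin p => n) :=
  (WithLp.equiv 2 (∀ _ : Fin p, EuclideanSpace ℝ (Fin n))).symm fun _ => v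

lemma allBlk_apply (v : EuclideanSpace ℝ (Fin n)) (ℓ : Fin p) : allBlk p v ℓ = v := rfl

lemma hasGradientAt_fhat (f : EuclideanSpace ℝ (Fin n) → ℝ) (hf : Differentiable ℝ f)
    (x : Sp (fun _ : Fin p => n)) :
    HasGradientAt (fhat p f) (allBlk p (gradient f (blockSum p x))) x := by
  have h1 : HasFDerivAt f
      ((InnerProductSpace.toDual ℝ _) (gradient f (blockSum p x))) (sumCLM p n x) := by
    exact ((hf _).hasGradientAt.hasFDerivAt)
  have h2 : HasFDerivAt (fhat p f)
      (((InnerProductSpace.toDual ℝ _) (gradient f (blockSum p x))).comp (sumCLM p n)) x :=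
    h1.comp x (sumCLM p n).hasFDerivAt
  rw [hasGradientAt_iff_hasFDerivAt]
  refine h2.congr_fderiv ?_
  symm
  apply ContinuousLinearMap.ext
  intro v
  simp only [ContinuousLinearMap.comp_apply, InnerProductSpace.toDual_apply_apply]
  rw [PiLp.inner_apply, sumCLM_apply, inner_sum]
  simp only [allBlk_apply]

lemma gradient_fhat (f : EuclideanSpace ℝ (Fin n) → ℝ) (hf : Differentiable ℝ f)
    (x : Sp (fun _ : Fin p => n)) (ℓ : Fin p) :
    gradient (fhat p f) x ℓ = gradient f (blockSum p x) := by
  rw [(hasGradientAt_fhat f hf x).gradient]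
  rfl

lemma fhat_differentiable (f : EuclideanSpace ℝ (Fin n) → ℝ) (hf : Differentiable ℝ f) :
    Differentiable ℝ (fhat p f) :=
  fun x => (hasGradientAt_fhat f hf x).differentiableAt

lemma fhat_convex (f : EuclideanSpace ℝ (Fin n) → ℝ) (hc : ConvexOn ℝ Set.univ f) :
    ConvexOn ℝ Set.univ (fhat p f) := by
  refine ⟨convex_univ, ?_⟩
  intro x _ y _ a b ha hb hab
  have h1 : ∑ ℓ : Fin p, (a • x + b • y) ℓ = a • ∑ ℓ : Fin p, x ℓ + b • ∑ ℓ : Fin p, y ℓ := by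
    simp only [PiLp.add_apply, PiLp.smul_apply]
    rw [Finset.sum_add_distrib, Finset.smul_sum, Finset.smul_sum]
  simp only [fhat]
  rw [h1]
  exact hc.2 (Set.mem_univ _) (Set.mem_univ _) ha hb hab

lemma blockSum_inj (ℓ : Fin p) (h : EuclideanSpace ℝ (Fin n)) :
    blockSum p (inj (fun _ : Fin p => n) ℓ h) = h := by
  simp only [blockSum, inj_apply]
  simpa using Finset.sum_pi_single' ℓ h Finset.univ

lemma blockSum_sub_smul (x y : Sp (fun _ : Fin p => n)) (c : ℝ) :
    blockSum p (x - c • y) = blockSum p x - c • blockSum p y := by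
  simp only [blockSum, PiLp.sub_apply, PiLp.smul_apply]
  rw [Finset.sum_sub_distrib, Finset.smul_sum]

lemma blockSum_diagPt (hp : 0 < p) (v : EuclideanSpace ℝ (Fin n)) :
    blockSum p (diagPt p v) = v := by
  simp only [blockSum, diagPt]
  have : ∀ ℓ : Fin p, ((WithLp.equiv 2 (∀ _ : Fin p, EuclideanSpace ℝ (Fin n))).symm
      fun _ => (p : ℝ)⁻¹ • v) ℓ = (p : ℝ)⁻¹ • v := fun _ => rfl
  rw [Finset.sum_congr rfl fun ℓ _ => this ℓ, Finset.sum_const, Finset.card_univ,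
    Fintype.card_fin, ← Nat.cast_smul_eq_nsmul ℝ, smul_smul]
  rw [mul_inv_cancel₀ (by exact_mod_cast hp.ne' : (p:ℝ) ≠ 0), one_smul]

lemma fhat_coordSmooth (f : EuclideanSpace ℝ (Fin n) → ℝ)
    (hc : ConvexOn ℝ Set.univ f) (hf : Differentiable ℝ f)
    (hlip : ∀ a b : EuclideanSpace ℝ (Fin n), ‖gradient f a - gradient f b‖ ≤ ‖a - b‖) :
    IsCoordSmooth (fun _ : Fin p => n) (fun _ => 1) (fhat p f) := by
  refine ⟨fhat_convex f hc, fhat_differentiable f hf, ?_⟩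
  intro ℓ x h
  rw [gradient_fhat f hf _ ℓ, gradient_fhat f hf _ ℓ, one_mul]
  have hbs : blockSum p (x + inj (fun _ : Fin p => n) ℓ h) = blockSum p x + h := by
    have : x + inj (fun _ : Fin p => n) ℓ h = x - (-1 : ℝ) • inj (fun _ : Fin p => n) ℓ h := by
      simp
    rw [this, blockSum_sub_smul, blockSum_inj]
    simp
  rw [hbs]
  simpa using hlip (blockSum p x + h) (blockSum p x)
end Fhat

section Main
variable {p n : ℕ}

lemma fhat_diagPt (hp : 0 < p) (f : EuclideanSpace ℝ (Fin n) → ℝ)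
    (v : EuclideanSpace ℝ (Fin n)) : fhat p f (diagPt p v) = f v := by
  show f (∑ ℓ : Fin p, diagPt p v ℓ) = f v
  congr 1
  exact blockSum_diagPt hp v

lemma construction {K : ℕ} (hp : 0 < p)
    (f : EuclideanSpace ℝ (Fin n) → ℝ)
    (hconv : ConvexOn ℝ Set.univ f) (hdiff : Differentiable ℝ f)
    (x₀ xstar : EuclideanSpace ℝ (Fin n)) (hmin : IsMinOn f Set.univ xstar)
    (hne : x₀ ≠ xstar) (γ : Fin p → ℝ)
    (xh : ℕ → Sp (fun _ : Fin p => n)) (hxh0 : xh 0 = diagPt p x₀)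
    (hiter : IsCCD hp (fun _ : Fin p => n) γ (fhat p f) xh) :
    IsMinOn (fhat p f) Set.univ (diagPt p xstar) ∧
    ((blockSum p (xh 0)) = x₀ ∧ ∀ i : ℕ,
      (blockSum p (xh (i + 1))) =
        blockSum p (xh i) - γ (blkIdx p hp i) • gradient f (blockSum p (xh i))) ∧
    (∀ i : ℕ, fhat p f (xh i) = f (blockSum p (xh i))) ∧
    (∑ ℓ : Fin p, ‖xh 0 ℓ - diagPt p xstar ℓ‖ ^ 2) = (p : ℝ)⁻¹ * ‖x₀ - xstar‖ ^ 2 ∧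
    (fhat p f (xh (p * K)) - fhat p f (diagPt p xstar)) /
        (∑ ℓ : Fin p, ‖xh 0 ℓ - diagPt p xstar ℓ‖ ^ 2)
      = p * ((f (blockSum p (xh (p * K))) - f xstar) / ‖x₀ - xstar‖ ^ 2) := by
  have hpR : (0:ℝ) < p := by exact_mod_cast hp
  have hmin' : ∀ y, f xstar ≤ f y := fun y => hmin (Set.mem_univ y)
  have hfd : fhat p f (diagPt p xstar) = f xstar := fhat_diagPt hp f xstar
  have ha : IsMinOn (fhat p f) Set.univ (diagPt p xstar) := by
    rw [isMinOn_iff]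
    intro y _
    rw [hfd]
    exact hmin' (blockSum p y)
  have hc : ∀ i : ℕ, fhat p f (xh i) = f (blockSum p (xh i)) := fun i => rfl
  have hb0 : blockSum p (xh 0) = x₀ := by rw [hxh0]; exact blockSum_diagPt hp x₀
  have hbs : ∀ i : ℕ, (blockSum p (xh (i + 1))) =
      blockSum p (xh i) - γ (blkIdx p hp i) • gradient f (blockSum p (xh i)) := by
    intro i
    rw [hiter i, blockSum_sub_smul, blockSum_inj, gradient_fhat f hdiff _]
  have hd : (∑ ℓ : Fin p, ‖xh 0 ℓ - diagPt p xstar ℓ‖ ^ 2)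
      = (p : ℝ)⁻¹ * ‖x₀ - xstar‖ ^ 2 := by
    have hblk : ∀ ℓ : Fin p, xh 0 ℓ - diagPt p xstar ℓ = (p:ℝ)⁻¹ • (x₀ - xstar) := by
      intro ℓ
      rw [hxh0]
      show (p:ℝ)⁻¹ • x₀ - (p:ℝ)⁻¹ • xstar = (p:ℝ)⁻¹ • (x₀ - xstar)
      rw [smul_sub]
    have hterm : ∀ ℓ : Fin p, ‖xh 0 ℓ - diagPt p xstar ℓ‖ ^ 2
        = ((p:ℝ)⁻¹) ^ 2 * ‖x₀ - xstar‖ ^ 2 := by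
      intro ℓ
      rw [hblk ℓ, norm_smul, Real.norm_eq_abs, abs_of_nonneg (by positivity), mul_pow]
    rw [Finset.sum_congr rfl fun ℓ _ => hterm ℓ, Finset.sum_const, Finset.card_univ,
      Fintype.card_fin, nsmul_eq_mul]
    field_simp
  refine ⟨ha, ⟨hb0, hbs⟩, hc, hd, ?_⟩
  have hDne : ‖x₀ - xstar‖ ^ 2 ≠ 0 :=
    pow_ne_zero 2 (norm_ne_zero_iff.2 (sub_ne_zero.2 hne))
  rw [hd, hfd, hc (p * K)]
  rw [div_eq_iff (by positivity), mul_comm ((p:ℝ)⁻¹) _]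
  field_simp
  rw [mul_div_assoc, div_self (norm_ne_zero_iff.2 (sub_ne_zero.2 hne)), mul_one]
end Main

/-- CCD iterates as a recursively defined sequence. -/
def ccdSeq {p : ℕ} (hp : 0 < p) (d : Fin p → ℕ) (s : Fin p → ℝ) (f : Sp d → ℝ)
    (x0 : Sp d) : ℕ → Sp d
  | 0 => x0
  | i + 1 => ccdSeq hp d s f x0 i - s (blkIdx p hp i) •
      inj d (blkIdx p hp i) (gradient f (ccdSeq hp d s f x0 i) (blkIdx p hp i))

/-- Gradient descent iterates as a recursively defined sequence. -/
def gdSeq {n p : ℕ} (hp : 0 < p) (γ : Fin p → ℝ) (g : EuclideanSpace ℝ (Fin n) → ℝ)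
    (u0 : EuclideanSpace ℝ (Fin n)) : ℕ → EuclideanSpace ℝ (Fin n)
  | 0 => u0
  | i + 1 => gdSeq hp γ g u0 i - γ (blkIdx p hp i) • gradient g (gdSeq hp γ g u0 i)

lemma sSup_mul_le {A B : Set ℝ} (hA : A.Nonempty) (hB : BddAbove B) {c : ℝ} (hc : 0 < c)
    (h : ∀ r ∈ A, c * r ∈ B) : c * sSup A ≤ sSup B := by
  have h1 : sSup A ≤ sSup B / c := by
    apply csSup_le hA
    intro r hr
    rw [le_div_iff₀ hc, mul_comm]
    exact le_csSup hB (h r hr)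
  calc c * sSup A ≤ c * (sSup B / c) := mul_le_mul_of_nonneg_left h1 hc.le
    _ = sSup B := by field_simp

end AuxProofs

theorem ccd_lower_bound_construction {n p K : ℕ} (hp : 0 < p)
    (f : EuclideanSpace ℝ (Fin n) → ℝ)
    (hconv : ConvexOn ℝ Set.univ f) (hdiff : Differentiable ℝ f)
    (hlip : ∀ a b : EuclideanSpace ℝ (Fin n), ‖gradient f a - gradient f b‖ ≤ ‖a - b‖)
    (x₀ xstar : EuclideanSpace ℝ (Fin n)) (hmin : IsMinOn f Set.univ xstar)
    (hne : x₀ ≠ xstar) (γ : Fin p → ℝ) (hγ : ∀ ℓ, 0 < γ ℓ)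
    (xh : ℕ → Sp (fun _ : Fin p => n)) (hxh0 : xh 0 = diagPt p x₀)
    (hiter : IsCCD hp (fun _ : Fin p => n) γ (fhat p f) xh) :
    -- (a) the diagonal point built from `x_*` is a global minimizer of `f̂`
    IsMinOn (fhat p f) Set.univ (diagPt p xstar) ∧
    -- (b) the block sums are gradient descent iterates on `f`
    ((blockSum p (xh 0)) = x₀ ∧ ∀ i : ℕ,
      (blockSum p (xh (i + 1))) =
        blockSum p (xh i) - γ (blkIdx p hp i) • gradient f (blockSum p (xh i))) ∧
    -- (c) function values agree
    (∀ i : ℕ, fhat p f (xh i) = f (blockSum p (xh i))) ∧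
    -- (d) the weighted initial distance
    (∑ ℓ : Fin p, ‖xh 0 ℓ - diagPt p xstar ℓ‖ ^ 2) = (p : ℝ)⁻¹ * ‖x₀ - xstar‖ ^ 2 ∧
    -- (e) the performance ratio is multiplied by `p`
    (fhat p f (xh (p * K)) - fhat p f (diagPt p xstar)) /
        (∑ ℓ : Fin p, ‖xh 0 ℓ - diagPt p xstar ℓ‖ ^ 2)
      = p * ((f (blockSum p (xh (p * K))) - f xstar) / ‖x₀ - xstar‖ ^ 2) ∧
    -- in particular, the worst case of CCD is at least `p` times the worst case of GD
    p * WGD n hp γ (p * K) ≤ WCCD hp (fun _ : Fin p => n) γ (fun _ => 1) K := by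
  obtain ⟨ha, hb, hc, hd, he⟩ :=
    construction (K := K) hp f hconv hdiff x₀ xstar hmin hne γ xh hxh0 hiter
  refine ⟨ha, hb, hc, hd, he, ?_⟩
  have hpR : (0:ℝ) < p := by exact_mod_cast hp
  have hγ' : ∀ ℓ, 0 ≤ γ ℓ := fun ℓ => (hγ ℓ).le
  unfold WGD WCCD
  refine sSup_mul_le ?_ ?_ hpR ?_
  · -- A is nonempty
    exact ⟨(f (gdSeq hp γ f x₀ (p * K)) - f xstar) / ‖x₀ - xstar‖ ^ 2,
      f, gdSeq hp γ f x₀, xstar, hconv, hdiff, hlip, hmin, fun i => rfl, hne, rfl⟩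
  · -- B is bounded above
    refine ⟨2 * p * ∏ j ∈ Finset.range (p * K), (1 + γ (blkIdx p hp j) ^ 2), ?_⟩
    rintro r ⟨f', x', xs', hsm', hmin', hccd', hne', rfl⟩
    have hrb := ratio_bound hp γ hγ' (p * K) f' x' xs' hsm' hmin' hccd' hne'
    simpa [one_mul] using hrb
  · -- mapping A into B with factor p
    rintro r ⟨g, u, us, hgc, hgd, hglip, hgmin, hgit, hgne, rfl⟩
    set xh' : ℕ → Sp (fun _ : Fin p => n) :=
      ccdSeq hp (fun _ : Fin p => n) γ (fhat p g) (diagPt p (u 0)) with hxh'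
    have hxh'0 : xh' 0 = diagPt p (u 0) := rfl
    have hiter' : IsCCD hp (fun _ : Fin p => n) γ (fhat p g) xh' := fun i => rfl
    obtain ⟨ha', ⟨hb0', hbs'⟩, hc', hd', he'⟩ :=
      construction (K := K) hp g hgc hgd (u 0) us hgmin hgne γ xh' hxh'0 hiter'
    have hbsu : ∀ i, blockSum p (xh' i) = u i := by
      intro i
      induction i with
      | zero => exact hb0'
      | succ i ih => rw [hbs' i, ih]; exact (hgit i).symm
    have hneq' : xh' 0 ≠ diagPt p us := by
      rw [hxh'0]
      intro hEq
      apply hgne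
      have := congrArg (blockSum p) hEq
      rwa [blockSum_diagPt hp, blockSum_diagPt hp] at this
    refine ⟨fhat p g, xh', diagPt p us, fhat_coordSmooth g hgc hgd hglip, ha', hiter',
      hneq', ?_⟩
    have hval : (fhat p g (xh' (p * K)) - fhat p g (diagPt p us)) /
        ∑ ℓ, (fun _ : Fin p => (1:ℝ)) ℓ * ‖xh' 0 ℓ - diagPt p us ℓ‖ ^ 2
        = (fhat p g (xh' (p * K)) - fhat p g (diagPt p us)) /
        ∑ ℓ : Fin p, ‖xh' 0 ℓ - diagPt p us ℓ‖ ^ 2 := by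
      simp [one_mul]
    rw [hval, he', hbsu (p * K)]
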